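/- Let V₄ = ℤ/2 × ℤ/2, let R = ℚ[V₄] be its group algebra with canonical basis {e_{(m,a)} : (m,a) ∈ V₄}, and for n ≥ 1 let ψ^n : R → R be the ℚ-linear map with ψ^n(e_{(m,a)}) = e_{(m, n·a)}. Set σ₊ := (1/2)(e_{(0,0)} + e_{(0,1)} + e_{(1,0)} − e_{(1,1)}) and σ₋ := (1/2)(e_{(0,0)} + e_{(0,1)} − e_{(1,0)} + e_{(1,1)}). Then the set of units L ∈ R satisfying ψ^n(L) = L^n for all n ≥ 1 is exactly the four-element set {e_{(0,0)}, e_{(0,1)}, σ₊, σ₋}; moreover σ₊·σ₊ = σ₋·σ₋ = e_{(0,0)}, σ₊·σ₋ = e_{(0,1)}, e_{(0,1)}·σ₊ = σ₋, and e_{(0,1)}·σ₋ = σ₊. -/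

import Mathlib

/-!
STATEMENT 13: Let `V₄ = ℤ/2 × ℤ/2`, `R = ℚ[V₄]` its group algebra with basis
`e_{(m,a)}`, and for `n ≥ 1` let `ψ^n : R → R` be the ℚ-linear map with
`ψ^n(e_{(m,a)}) = e_{(m, n·a)}`.  With
`σ₊ = (1/2)(e_{(0,0)} + e_{(0,1)} + e_{(1,0)} - e_{(1,1)})` and
`σ₋ = (1/2)(e_{(0,0)} + e_{(0,1)} - e_{(1,0)} + e_{(1,1)})`, the set of units
`L` with `ψ^n(L) = L^n` for all `n ≥ 1` is exactly
`{e_{(0,0)}, e_{(0,1)}, σ₊, σ₋}`; moreover `σ₊σ₊ = σ₋σ₋ = e_{(0,0)}`,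
`σ₊σ₋ = e_{(0,1)}`, `e_{(0,1)}σ₊ = σ₋` and `e_{(0,1)}σ₋ = σ₊`.
-/

/-- The group algebra `ℚ[ℤ/2 × ℤ/2]`. -/
abbrev GroupAlgV4 : Type := AddMonoidAlgebra ℚ (ZMod 2 × ZMod 2)

/-- The canonical basis element `e_{(m,a)}` of `ℚ[ℤ/2 × ℤ/2]`. -/
noncomputable def eV4 (p : ZMod 2 × ZMod 2) : GroupAlgV4 :=
  AddMonoidAlgebra.single p 1

/-- `σ₊ = (1/2)(e_{(0,0)} + e_{(0,1)} + e_{(1,0)} - e_{(1,1)})`. -/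
noncomputable def sigmaPlus : GroupAlgV4 :=
  (1 / 2 : ℚ) • (eV4 (0, 0) + eV4 (0, 1) + eV4 (1, 0) - eV4 (1, 1))

/-- `σ₋ = (1/2)(e_{(0,0)} + e_{(0,1)} - e_{(1,0)} + e_{(1,1)})`. -/
noncomputable def sigmaMinus : GroupAlgV4 :=
  (1 / 2 : ℚ) • (eV4 (0, 0) + eV4 (0, 1) - eV4 (1, 0) + eV4 (1, 1))

section Aux

@[simp] lemma GroupAlgV4.addApply (x y : GroupAlgV4) (p : ZMod 2 × ZMod 2) :
    (x + y).coeff p = x.coeff p + y.coeff p := rfl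
@[simp] lemma GroupAlgV4.negApply (x : GroupAlgV4) (p : ZMod 2 × ZMod 2) :
    (-x).coeff p = -(x.coeff p) := rfl
@[simp] lemma GroupAlgV4.subApply (x y : GroupAlgV4) (p : ZMod 2 × ZMod 2) :
    (x - y).coeff p = x.coeff p - y.coeff p := rfl
@[simp] lemma GroupAlgV4.smulApply (c : ℚ) (x : GroupAlgV4) (p : ZMod 2 × ZMod 2) :
    (c • x).coeff p = c * x.coeff p := rfl
@[simp] lemma GroupAlgV4.eApply (p q : ZMod 2 × ZMod 2) :
    (eV4 p).coeff q = if p = q then 1 else 0 := by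
  rw [eV4]; exact AddMonoidAlgebra.coeff_single_apply

lemma GroupAlgV4.e_one : eV4 (0, 0) = 1 := by
  rw [eV4, AddMonoidAlgebra.one_def]; rfl

@[simp] lemma GroupAlgV4.oneApply (p : ZMod 2 × ZMod 2) :
    (1 : GroupAlgV4).coeff p = if p = 0 then 1 else 0 := by
  rw [← GroupAlgV4.e_one, GroupAlgV4.eApply]; simp +decide [eq_comm]; rfl

lemma GroupAlgV4.e_mul (p q : ZMod 2 × ZMod 2) : eV4 p * eV4 q = eV4 (p + q) := by
  simp [eV4, AddMonoidAlgebra.single_mul_single]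

lemma GroupAlgV4.e_pow (p : ZMod 2 × ZMod 2) (n : ℕ) : eV4 p ^ n = eV4 (n • p) := by
  simp [eV4, AddMonoidAlgebra.single_pow]

lemma GroupAlgV4.rep (L : GroupAlgV4) : L = L.coeff (0,0) • eV4 (0,0) + L.coeff (0,1) • eV4 (0,1)
    + L.coeff (1,0) • eV4 (1,0) + L.coeff (1,1) • eV4 (1,1) := by
  ext p <;> fin_cases p <;> simp +decide <;> norm_num <;> rfl

lemma GroupAlgV4.cast_even {n : ℕ} (h : Even n) : (n : ZMod 2) = 0 := by
  obtain ⟨k, rfl⟩ := h; push_cast; ring_nf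
  have h2 : ((2 : ℕ) : ZMod 2) = 0 := ZMod.natCast_self 2
  push_cast at h2; rw [h2, mul_zero]

lemma GroupAlgV4.cast_odd {n : ℕ} (h : Odd n) : (n : ZMod 2) = 1 := by
  obtain ⟨k, rfl⟩ := h; push_cast
  have h2 : ((2 : ℕ) : ZMod 2) = 0 := ZMod.natCast_self 2
  push_cast at h2; rw [h2]; ring

lemma GroupAlgV4.pow_even {R : Type*} [Monoid R] {M : R} (h : M * M = 1) {n : ℕ}
    (hn : Even n) : M ^ n = 1 := by
  obtain ⟨k, rfl⟩ := hn
  rw [← two_mul, pow_mul, pow_two, h, one_pow]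

lemma GroupAlgV4.pow_odd {R : Type*} [Monoid R] {M : R} (h : M * M = 1) {n : ℕ}
    (hn : Odd n) : M ^ n = M := by
  obtain ⟨k, rfl⟩ := hn
  rw [pow_succ, pow_mul, pow_two, h, one_pow, one_mul]

lemma GroupAlgV4.prod1 : sigmaPlus * sigmaPlus = eV4 (0, 0) := by
  simp only [sigmaPlus, smul_mul_assoc, mul_smul_comm, smul_smul, sub_mul, mul_sub,
    add_mul, mul_add, GroupAlgV4.e_mul]
  ext p <;> fin_cases p <;> simp +decide <;> norm_num

lemma GroupAlgV4.prod2 : sigmaMinus * sigmaMinus = eV4 (0, 0) := by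
  simp only [sigmaMinus, smul_mul_assoc, mul_smul_comm, smul_smul, sub_mul, mul_sub,
    add_mul, mul_add, GroupAlgV4.e_mul]
  ext p <;> fin_cases p <;> simp +decide <;> norm_num

lemma GroupAlgV4.prod3 : sigmaPlus * sigmaMinus = eV4 (0, 1) := by
  simp only [sigmaPlus, sigmaMinus, smul_mul_assoc, mul_smul_comm, smul_smul, sub_mul,
    mul_sub, add_mul, mul_add, GroupAlgV4.e_mul]
  ext p <;> fin_cases p <;> simp +decide <;> norm_num

lemma GroupAlgV4.prod4 : eV4 (0, 1) * sigmaPlus = sigmaMinus := by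
  simp only [sigmaPlus, sigmaMinus, smul_mul_assoc, mul_smul_comm, smul_smul, sub_mul,
    mul_sub, add_mul, mul_add, GroupAlgV4.e_mul]
  ext p <;> fin_cases p <;> simp +decide <;> norm_num

lemma GroupAlgV4.prod5 : eV4 (0, 1) * sigmaMinus = sigmaPlus := by
  simp only [sigmaPlus, sigmaMinus, smul_mul_assoc, mul_smul_comm, smul_smul, sub_mul,
    mul_sub, add_mul, mul_add, GroupAlgV4.e_mul]
  ext p <;> fin_cases p <;> simp +decide <;> norm_num

end Aux

open GroupAlgV4 in
theorem orbifold_line_elements_of_Bmu2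
    (psi : ℕ → GroupAlgV4 →ₗ[ℚ] GroupAlgV4)
    (hpsi : ∀ n : ℕ, 1 ≤ n → ∀ p : ZMod 2 × ZMod 2,
      psi n (eV4 p) = eV4 (p.1, n • p.2)) :
    {L : GroupAlgV4 | IsUnit L ∧ ∀ n : ℕ, 1 ≤ n → psi n L = L ^ n}
      = {eV4 (0, 0), eV4 (0, 1), sigmaPlus, sigmaMinus} ∧
    sigmaPlus * sigmaPlus = eV4 (0, 0) ∧
    sigmaMinus * sigmaMinus = eV4 (0, 0) ∧
    sigmaPlus * sigmaMinus = eV4 (0, 1) ∧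
    eV4 (0, 1) * sigmaPlus = sigmaMinus ∧
    eV4 (0, 1) * sigmaMinus = sigmaPlus := by
  have hsm1 : ∀ n : ℕ, n • (1 : ZMod 2) = (n : ZMod 2) := fun n => by
    rw [nsmul_eq_mul, mul_one]
  refine ⟨?_, prod1, prod2, prod3, prod4, prod5⟩
  ext L
  simp only [Set.mem_setOf_eq, Set.mem_insert_iff, Set.mem_singleton_iff]
  constructor
  · rintro ⟨hU, hL⟩
    obtain ⟨a, b, c, d, hrep⟩ : ∃ a b c d : ℚ, L = a • eV4 (0,0) + b • eV4 (0,1)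
        + c • eV4 (1,0) + d • eV4 (1,1) := ⟨_, _, _, _, GroupAlgV4.rep L⟩
    have h21 : (2 : ℕ) • (1 : ZMod 2) = 0 := by decide
    have h41 : (4 : ℕ) • (1 : ZMod 2) = 0 := by decide
    have hps2 : psi 2 L = (a + b) • eV4 (0,0) + (c + d) • eV4 (1,0) := by
      conv_lhs => rw [hrep]
      simp only [map_add, map_smul, hpsi 2 (by norm_num), h21, smul_zero]
      module
    have hps4 : psi 4 L = (a + b) • eV4 (0,0) + (c + d) • eV4 (1,0) := by
      conv_lhs => rw [hrep]
      simp only [map_add, map_smul, hpsi 4 (by norm_num), h41, smul_zero]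
      module
    have h24 : L ^ 2 = L ^ 4 := by
      rw [← hL 2 (by norm_num), ← hL 4 (by norm_num), hps2, hps4]
    have hsq : L ^ 2 = 1 := by
      have h : L ^ 2 * L ^ 2 = L ^ 2 * 1 := by rw [mul_one, ← pow_add]; exact h24.symm
      exact ((hU.pow 2).mul_left_cancel h).symm ▸ rfl
    have hcoef : (a + b) • eV4 (0,0) + (c + d) • eV4 (1,0) = 1 := by
      rw [← hps2, hL 2 (by norm_num), hsq]
    have hab : a + b = 1 := by
      have h := congrArg (fun f : GroupAlgV4 => f.coeff (0,0)) hcoef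
      simpa +decide using h
    have hcd : c + d = 0 := by
      have h := congrArg (fun f : GroupAlgV4 => f.coeff (1,0)) hcoef
      simpa +decide using h
    have hb : b = 1 - a := by linarith
    have hd : d = -c := by linarith
    subst hb hd
    have hLL : (a • eV4 (0,0) + (1-a) • eV4 (0,1) + c • eV4 (1,0) + (-c) • eV4 (1,1)) *
        (a • eV4 (0,0) + (1-a) • eV4 (0,1) + c • eV4 (1,0) + (-c) • eV4 (1,1)) = 1 := by
      rw [← hrep, ← pow_two]; exact hsq
    simp only [smul_mul_assoc, mul_smul_comm, smul_smul, add_mul, mul_add,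
      GroupAlgV4.e_mul] at hLL
    have h01 := congrArg (fun f : GroupAlgV4 => f.coeff (0,1)) hLL
    have h10 := congrArg (fun f : GroupAlgV4 => f.coeff (1,0)) hLL
    simp +decide at h01 h10
    have hcase : c * (2 * a - 1) = 0 := by linear_combination h10 / 2
    rcases mul_eq_zero.mp hcase with hc | ha
    · subst hc
      have h2 : a * (1 - a) = 0 := by linear_combination h01 / 2
      rcases mul_eq_zero.mp h2 with h3 | h3
      · subst h3
        right; left
        rw [hrep]; module
      · have h4 : a = 1 := by linarith
        subst h4
        left
        rw [hrep]; module
    · have h4 : a = 1 / 2 := by linarith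
      subst h4
      have h2 : (c - 1 / 2) * (c + 1 / 2) = 0 := by linear_combination -h01 / 2
      rcases mul_eq_zero.mp h2 with h3 | h3
      · have h5 : c = 1 / 2 := by linarith
        subst h5
        right; right; left
        rw [hrep, sigmaPlus]; module
      · have h5 : c = -(1 / 2) := by linarith
        subst h5
        right; right; right
        rw [hrep, sigmaMinus]; module
  · intro h
    rcases h with h | h | h | h <;> subst h
    · refine ⟨e_one ▸ isUnit_one, fun n hn => ?_⟩
      rw [hpsi n hn, e_pow]
      simp
    · refine ⟨IsUnit.of_mul_eq_one (eV4 (0,1)) (by rw [e_mul]; exact (by decide : ((0,1) : ZMod 2 × ZMod 2) + (0,1) = (0,0)) ▸ e_one), fun n hn => ?_⟩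
      rw [hpsi n hn, e_pow]
      congr 1
      simp [Prod.smul_mk, hsm1]
    · have hmul : sigmaPlus * sigmaPlus = 1 := by rw [prod1, e_one]
      refine ⟨IsUnit.of_mul_eq_one _ hmul, fun n hn => ?_⟩
      have hexp : psi n sigmaPlus = (1/2 : ℚ) •
          (eV4 (0,0) + eV4 (0, (n : ZMod 2)) + eV4 (1,0) - eV4 (1, (n : ZMod 2))) := by
        rw [sigmaPlus, map_smul, map_sub, map_add, map_add, hpsi n hn, hpsi n hn,
          hpsi n hn, hpsi n hn]
        simp [hsm1]
      rcases Nat.even_or_odd n with hpar | hpar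
      · rw [pow_even hmul hpar, hexp, cast_even hpar, ← e_one]; module
      · rw [pow_odd hmul hpar, hexp, cast_odd hpar, sigmaPlus]
    · have hmul : sigmaMinus * sigmaMinus = 1 := by rw [prod2, e_one]
      refine ⟨IsUnit.of_mul_eq_one _ hmul, fun n hn => ?_⟩
      have hexp : psi n sigmaMinus = (1/2 : ℚ) •
          (eV4 (0,0) + eV4 (0, (n : ZMod 2)) - eV4 (1,0) + eV4 (1, (n : ZMod 2))) := by
        rw [sigmaMinus, map_smul, map_add, map_sub, map_add, hpsi n hn, hpsi n hn,
          hpsi n hn, hpsi n hn]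
        simp [hsm1]
      rcases Nat.even_or_odd n with hpar | hpar
      · rw [pow_even hmul hpar, hexp, cast_even hpar, ← e_one]; module
      · rw [pow_odd hmul hpar, hexp, cast_odd hpar, sigmaMinus]
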